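/- Every topological group G with countable cellularity (every pairwise disjoint family of nonempty open subsets of G is countable) which is Hausdorff is ω-narrow: for every open neighborhood U of the identity there is a countable set S ⊆ G with G = S·U. -/

import Mathlib

open scoped Pointwise


/-- Every Hausdorff topological group with countable cellularity is
ω-narrow: for every open neighborhood `U` of the identity there is a countable
set `S` with `G = S·U`. -/
theorem omega_narrow_of_ccc
    {G : Type*} [Group G] [TopologicalSpace G] [IsTopologicalGroup G] [T2Space G]
    (hccc : ∀ 𝒰 : Set (Set G), (∀ U ∈ 𝒰, IsOpen U ∧ U.Nonempty) →
      (𝒰.Pairwise fun U V => U ∩ V = ∅) → 𝒰.Countable) :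
    ∀ U : Set G, IsOpen U → (1 : G) ∈ U →
      ∃ S : Set G, S.Countable ∧ ∀ g : G, ∃ s ∈ S, ∃ u ∈ U, g = s * u := by
  intro U hU h1
  -- get a symmetric open V with V*V ⊆ U
  obtain ⟨W, hWo, hW1, hWU⟩ := exists_open_nhds_one_mul_subset (hU.mem_nhds h1)
  set V : Set G := W ∩ W⁻¹ with hVdef
  have hVo : IsOpen V := hWo.inter hWo.inv
  have hV1 : (1 : G) ∈ V := ⟨hW1, by simpa using hW1⟩
  have hVsymm : ∀ v ∈ V, v⁻¹ ∈ V := fun v hv => ⟨hv.2, by simpa using hv.1⟩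
  have hVU : ∀ a ∈ V, ∀ b ∈ V, a * b ∈ U := fun a ha b hb =>
    hWU (Set.mul_mem_mul ha.1 hb.1)
  -- Zorn: maximal S with pairwise disjoint translates s • V
  set 𝒜 : Set (Set G) := {S | S.Pairwise fun s t => (s • V) ∩ (t • V) = ∅} with h𝒜
  obtain ⟨S, hSmax⟩ : ∃ m, Maximal (· ∈ 𝒜) m := by
    apply zorn_subset
    intro c hc hchain
    refine ⟨⋃₀ c, ?_, fun s hs => Set.subset_sUnion_of_mem hs⟩
    intro s hs t ht hst
    obtain ⟨A, hA, hsA⟩ := hs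
    obtain ⟨B, hB, htB⟩ := ht
    rcases hchain.total hA hB with h | h
    · exact hc hB (h hsA) htB hst
    · exact hc hA hsA (h htB) hst
  have hS : S ∈ 𝒜 := hSmax.1
  -- countability of S
  have hScnt : S.Countable := by
    have himg : ((fun s => s • V) '' S).Countable := by
      apply hccc
      · rintro _ ⟨s, _, rfl⟩
        exact ⟨hVo.smul s, Set.smul_set_nonempty.mpr ⟨1, hV1⟩⟩
      · rintro _ ⟨s, hs, rfl⟩ _ ⟨t, ht, rfl⟩ hne
        exact hS hs ht (fun h => hne (by rw [h]))
    have hinj : Set.InjOn (fun s : G => s • V) S := by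
      intro s hs t ht heq
      simp only [] at heq
      by_contra hne
      have := hS hs ht hne
      have h1 : s • (1:G) ∈ (s • V) ∩ (t • V) :=
        ⟨Set.smul_mem_smul_set hV1, heq ▸ Set.smul_mem_smul_set hV1⟩
      rw [this] at h1
      exact h1
    exact (Set.mapsTo_image _ _).countable_of_injOn hinj himg
  refine ⟨S, hScnt, fun g => ?_⟩
  by_cases hg : g ∈ S
  · exact ⟨g, hg, 1, h1, (mul_one g).symm⟩
  · -- maximality: S ∪ {g} not pairwise, so some translate meets g • V
    have : ¬ (insert g S ∈ 𝒜) := fun h => hg (hSmax.2 h (Set.subset_insert g S) (Set.mem_insert g S))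
    have hins : ¬ (insert g S).Pairwise fun s t => (s • V) ∩ (t • V) = ∅ := this
    -- extract witness
    obtain ⟨a, ha, b, hb, hab, hnd⟩ : ∃ a ∈ insert g S, ∃ b ∈ insert g S, a ≠ b ∧
        (a • V) ∩ (b • V) ≠ ∅ := by
      by_contra hcon
      push_neg at hcon
      exact hins (fun a ha b hb hab => hcon a ha b hb hab)
    -- one of a, b is g and the other in S
    have key : ∃ t ∈ S, (g • V) ∩ (t • V) ≠ ∅ := by
      rcases ha with rfl | haS
      · rcases hb with rfl | hbS
        · exact absurd rfl hab
        · exact ⟨b, hbS, hnd⟩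
      · rcases hb with rfl | hbS
        · refine ⟨a, haS, fun h => hnd ?_⟩
          rw [Set.eq_empty_iff_forall_notMem] at h ⊢
          intro x hx; exact h x ⟨hx.2, hx.1⟩
        · exact absurd (hS haS hbS hab) hnd
    obtain ⟨t, htS, hnd⟩ := key
    obtain ⟨x, hxg, hxt⟩ := Set.nonempty_iff_ne_empty.mpr hnd
    obtain ⟨v, hv, rfl⟩ := hxg
    obtain ⟨w, hw, hweq⟩ := hxt
    -- g • v = t • w, so g = t * (w * v⁻¹)
    refine ⟨t, htS, w * v⁻¹, hVU w hw v⁻¹ (hVsymm v hv), ?_⟩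
    have : g * v = t * w := by simpa [smul_eq_mul] using hweq.symm
    calc g = g * v * v⁻¹ := by group
    _ = t * (w * v⁻¹) := by rw [this, mul_assoc]
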